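/- For any integer d ≥ 2, min_{d'|d, d'>1} log(d'/φ(d'))/log d' = min_{p^j ∥ d} log(1 + 1/(p-1))/(j log p), where the second minimum is over primes p with p^j exactly dividing d. -/

import Mathlib

open Real

-- value of f at a prime power
lemma pp_value {p j : ℕ} (hp : p.Prime) (hj : 1 ≤ j) :
    Real.log ((p ^ j : ℕ) / (Nat.totient (p ^ j) : ℝ)) / Real.log ((p:ℕ) ^ j : ℕ)
      = Real.log (1 + 1 / ((p : ℝ) - 1)) / (j * Real.log p) := by
  have hp2 : (2:ℝ) ≤ (p:ℝ) := by exact_mod_cast hp.two_le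
  have hp1 : (p:ℝ) - 1 ≠ 0 := by linarith
  have hp0 : (0:ℝ) < p := by linarith
  have hratio : ((p ^ j : ℕ) : ℝ) / (Nat.totient (p ^ j) : ℝ) = 1 + 1 / ((p : ℝ) - 1) := by
    rw [Nat.totient_prime_pow hp hj]
    have hcast : ((p ^ (j-1) * (p - 1) : ℕ) : ℝ) = (p:ℝ)^(j-1) * ((p:ℝ) - 1) := by
      push_cast [Nat.cast_sub hp.one_lt.le]
      ring
    rw [hcast]
    have hj' : j = (j - 1) + 1 := by omega
    have hpj : ((p ^ j : ℕ) : ℝ) = (p:ℝ)^(j-1) * p := by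
      conv_lhs => rw [hj']
      push_cast
      ring
    rw [hpj]
    have hppow : (p:ℝ)^(j-1) ≠ 0 := by positivity
    field_simp
    ring
  rw [hratio]
  congr 1
  push_cast
  rw [Real.log_pow]

theorem alpha_min_over_prime_powers (d : ℕ) (hd : 2 ≤ d) :
    sInf ((fun d' : ℕ => Real.log ((d' : ℝ) / (Nat.totient d' : ℝ)) / Real.log d') ''
      {d' : ℕ | d' ∣ d ∧ 1 < d'})
    = sInf {x : ℝ | ∃ p j : ℕ, p.Prime ∧ 1 ≤ j ∧ p ^ j ∣ d ∧ ¬ p ^ (j + 1) ∣ d ∧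
        x = Real.log (1 + 1 / ((p : ℝ) - 1)) / (j * Real.log p)} := by
  have hd0 : d ≠ 0 := by omega
  set f : ℕ → ℝ := fun d' : ℕ => Real.log ((d' : ℝ) / (Nat.totient d' : ℝ)) / Real.log d'
    with hf
  set S : Set ℝ := f '' {d' : ℕ | d' ∣ d ∧ 1 < d'} with hS
  set T : Set ℝ := {x : ℝ | ∃ p j : ℕ, p.Prime ∧ 1 ≤ j ∧ p ^ j ∣ d ∧ ¬ p ^ (j + 1) ∣ d ∧
        x = Real.log (1 + 1 / ((p : ℝ) - 1)) / (j * Real.log p)} with hT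
  -- elements of T are nonneg
  have hTnonneg : ∀ x ∈ T, 0 ≤ x := by
    rintro x ⟨p, j, hp, hj, -, -, rfl⟩
    have hp2 : (2:ℝ) ≤ (p:ℝ) := by exact_mod_cast hp.two_le
    have h1 : (0:ℝ) ≤ Real.log (1 + 1 / ((p : ℝ) - 1)) := by
      apply Real.log_nonneg
      have : (0:ℝ) < 1 / ((p:ℝ) - 1) := one_div_pos.mpr (by linarith)
      linarith
    have h2 : (0:ℝ) ≤ (j:ℝ) * Real.log p := by
      have := Real.log_nonneg (by linarith : (1:ℝ) ≤ (p:ℝ))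
      positivity
    exact div_nonneg h1 h2
  -- elements of S are nonneg
  have hSnonneg : ∀ x ∈ S, 0 ≤ x := by
    rintro x ⟨d', ⟨hdvd, hd1⟩, rfl⟩
    have hφpos : 0 < Nat.totient d' := Nat.totient_pos.mpr (by omega)
    have h1 : (1:ℝ) ≤ (d' : ℝ) / (Nat.totient d' : ℝ) := by
      rw [le_div_iff₀ (by exact_mod_cast hφpos)]
      simpa using (Nat.cast_le.mpr (Nat.totient_le d') : (Nat.totient d' : ℝ) ≤ d')
    exact div_nonneg (Real.log_nonneg h1) (Real.log_nonneg (by exact_mod_cast hd1.le))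
  have hTbdd : BddBelow T := ⟨0, hTnonneg⟩
  have hSbdd : BddBelow S := ⟨0, hSnonneg⟩
  -- membership in T for each prime divisor of d
  have hTmem : ∀ p : ℕ, p.Prime → p ∣ d →
      Real.log (1 + 1 / ((p : ℝ) - 1)) / ((d.factorization p : ℝ) * Real.log p) ∈ T := by
    intro p hp hpd
    refine ⟨p, d.factorization p, hp, ?_, Nat.ordProj_dvd d p,
      Nat.pow_succ_factorization_not_dvd hd0 hp, rfl⟩
    exact (Nat.Prime.factorization_pos_of_dvd hp hd0 hpd)
  -- T nonempty
  obtain ⟨q, hq, hqd⟩ := Nat.exists_prime_and_dvd (by omega : d ≠ 1)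
  have hTne : T.Nonempty := ⟨_, hTmem q hq hqd⟩
  -- S nonempty
  have hSne : S.Nonempty := ⟨f d, d, ⟨dvd_refl d, hd⟩, rfl⟩
  apply le_antisymm
  · -- sInf S ≤ sInf T : every element of T is attained by a divisor p^j
    apply le_csInf hTne
    rintro x ⟨p, j, hp, hj, hdvd, -, rfl⟩
    have hmem : f (p ^ j) ∈ S :=
      ⟨p ^ j, ⟨hdvd, Nat.one_lt_pow (by omega) hp.one_lt⟩, rfl⟩
    have hval : f (p ^ j) = Real.log (1 + 1 / ((p : ℝ) - 1)) / (j * Real.log p) :=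
      pp_value hp hj
    rw [← hval]
    exact csInf_le hSbdd hmem
  · -- sInf T ≤ sInf S : main inequality
    apply le_csInf hSne
    rintro x ⟨d', ⟨hdvd, hd1⟩, rfl⟩
    set m := sInf T with hm
    have hm0 : 0 ≤ m := le_csInf hTne hTnonneg
    have hd'0 : d' ≠ 0 := by omega
    have hd'pos : (1:ℝ) < (d':ℝ) := by exact_mod_cast hd1
    have hlogd' : 0 < Real.log d' := Real.log_pos hd'pos
    have hφpos : 0 < Nat.totient d' := Nat.totient_pos.mpr (by omega)
    -- prime factors
    have hprime : ∀ p ∈ d'.primeFactors, p.Prime := fun p hp => Nat.prime_of_mem_primeFactors hp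
    -- ratio as product
    have hprodpos : (0:ℝ) < ∏ p ∈ d'.primeFactors, ((p:ℝ) - 1) := by
      apply Finset.prod_pos
      intro p hp
      have : (2:ℝ) ≤ (p:ℝ) := by exact_mod_cast (hprime p hp).two_le
      linarith
    have h1 : ((d'.totient : ℕ) : ℝ) * ∏ p ∈ d'.primeFactors, (p:ℝ)
        = (d' : ℝ) * ∏ p ∈ d'.primeFactors, ((p:ℝ) - 1) := by
      have h := Nat.totient_mul_prod_primeFactors d'
      have h' := congrArg (fun n : ℕ => (n:ℝ)) h
      push_cast at h'
      have hsub : ∀ p ∈ d'.primeFactors, ((p - 1 : ℕ) : ℝ) = (p:ℝ) - 1 := by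
        intro p hp
        rw [Nat.cast_sub (hprime p hp).one_lt.le]
        simp
      rw [Finset.prod_congr rfl hsub] at h'
      exact h' 
    have hratio : (d' : ℝ) / (d'.totient : ℝ) = ∏ p ∈ d'.primeFactors, ((p:ℝ) / ((p:ℝ) - 1)) := by
      rw [Finset.prod_div_distrib, div_eq_div_iff (by exact_mod_cast hφpos.ne') hprodpos.ne' ]
      rw [← h1]
      ring
    have hlog1 : Real.log ((d' : ℝ) / (d'.totient : ℝ))
        = ∑ p ∈ d'.primeFactors, Real.log ((p:ℝ) / ((p:ℝ) - 1)) := by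
      rw [hratio]
      apply Real.log_prod
      intro p hp
      have h2 : (2:ℝ) ≤ (p:ℝ) := by exact_mod_cast (hprime p hp).two_le
      exact (div_pos (by linarith) (by linarith)).ne' 
    have hlog2 : Real.log (d' : ℝ)
        = ∑ p ∈ d'.primeFactors, (d'.factorization p : ℝ) * Real.log p := by
      have hd'eq : (d' : ℝ) = ∏ p ∈ d'.primeFactors, (p:ℝ) ^ (d'.factorization p) := by
        conv_lhs => rw [← Nat.factorization_prod_pow_eq_self hd'0]
        rw [Nat.prod_factorization_eq_prod_primeFactors]
        push_cast
        rfl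
      rw [hd'eq, Real.log_prod]
      · apply Finset.sum_congr rfl
        intro p hp
        rw [Real.log_pow]
      · intro p hp
        have h2 : (2:ℝ) ≤ (p:ℝ) := by exact_mod_cast (hprime p hp).two_le
        exact pow_ne_zero _ (by linarith)
    -- termwise bound
    have hkey : m * Real.log d' ≤ Real.log ((d' : ℝ) / (d'.totient : ℝ)) := by
      rw [hlog1, hlog2, Finset.mul_sum]
      apply Finset.sum_le_sum
      intro p hp
      have hpp := hprime p hp
      have hpd : p ∣ d := (Nat.dvd_of_mem_primeFactors hp).trans hdvd
      have h2 : (2:ℝ) ≤ (p:ℝ) := by exact_mod_cast hpp.two_le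
      have hlogp : 0 < Real.log p := Real.log_pos (by linarith)
      set j := d.factorization p with hj
      have hjpos : 0 < j := Nat.Prime.factorization_pos_of_dvd hpp hd0 hpd
      have hle : d'.factorization p ≤ j := by
        have := (Nat.factorization_le_iff_dvd hd'0 hd0).mpr hdvd
        exact this p
      have hjlogp : (0:ℝ) < (j:ℝ) * Real.log p := by
        have : (0:ℝ) < (j:ℝ) := by exact_mod_cast hjpos
        positivity
      have hmle : m ≤ Real.log (1 + 1 / ((p : ℝ) - 1)) / ((j : ℝ) * Real.log p) :=
        csInf_le hTbdd (hTmem p hpp hpd)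
      have hstep : m * ((j:ℝ) * Real.log p) ≤ Real.log (1 + 1 / ((p : ℝ) - 1)) :=
        (le_div_iff₀ hjlogp).mp hmle
      have heq : Real.log ((p:ℝ) / ((p:ℝ) - 1)) = Real.log (1 + 1 / ((p : ℝ) - 1)) := by
        have hne : (p:ℝ) - 1 ≠ 0 := by linarith
        congr 1
        field_simp
        ring
      rw [heq]
      calc m * ((d'.factorization p : ℝ) * Real.log p)
          ≤ m * ((j:ℝ) * Real.log p) := by
            apply mul_le_mul_of_nonneg_left _ hm0
            apply mul_le_mul_of_nonneg_right _ hlogp.le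
            exact_mod_cast hle
        _ ≤ Real.log (1 + 1 / ((p : ℝ) - 1)) := hstep
    show m ≤ Real.log ((d' : ℝ) / (Nat.totient d' : ℝ)) / Real.log d'
    rw [le_div_iff₀ hlogd']
    exact hkey
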